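/- arXiv:1801.01578 — 2 statements merged into one kernel-verified Lean document; each statement's English description precedes it below -/
import Mathlib

section
/- Consider the saddle point matrices A_ε = [[A, B^T],[B, −Σ_ε]] and A_0 = [[A, B^T],[B, 0]], where A is symmetric positive definite, B has full row space equal to Im B_D × {0} with B = [B_D, 0] and B_D symmetric positive semidefinite, and Σ_ε = ε B_D with ε ≥ 0. Let (u_ε, λ_ε) solve A u_ε + B^T λ_ε = F, B u_ε − ε B_D λ_ε = 0 with λ_ε ∈ Im B_D, and (u_0, λ_0) solve A u_0 + B^T λ_0 = F, B u_0 = 0 with λ_0 ∈ Im B_D. Then ‖u_ε − u_0‖ → 0 as ε → 0⁺; moreover ‖u_ε − u_0‖² ≤ (ε / μ_min(A)) ⟨B_D λ_ε, λ_0⟩. -/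
open Matrix Filter

theorem stmt15 {n n0 : ℕ}
    (A : Matrix (Fin n ⊕ Fin n0) (Fin n ⊕ Fin n0) ℝ) (hA : A.PosDef)
    (μmin : ℝ) (hμmin : 0 < μmin)
    (hμ : ∀ x : Fin n ⊕ Fin n0 → ℝ, μmin * (x ⬝ᵥ x) ≤ (A *ᵥ x) ⬝ᵥ x)
    (BD : Matrix (Fin n) (Fin n) ℝ) (hBD : BD.PosSemidef)
    (B : Matrix (Fin n) (Fin n ⊕ Fin n0) ℝ)
    (hB : B = Matrix.of fun i => Sum.elim (BD i) 0)
    (F : Fin n ⊕ Fin n0 → ℝ)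
    (u : ℝ → (Fin n ⊕ Fin n0 → ℝ)) (lam : ℝ → (Fin n → ℝ))
    (heq1 : ∀ ε : ℝ, 0 ≤ ε → A *ᵥ u ε + Bᵀ *ᵥ lam ε = F)
    (heq2 : ∀ ε : ℝ, 0 ≤ ε → B *ᵥ u ε - ε • (BD *ᵥ lam ε) = 0)
    (hlam : ∀ ε : ℝ, 0 ≤ ε → lam ε ∈ LinearMap.range BD.mulVecLin)
    (u0 : Fin n ⊕ Fin n0 → ℝ) (lam0 : Fin n → ℝ)
    (heq10 : A *ᵥ u0 + Bᵀ *ᵥ lam0 = F)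
    (heq20 : B *ᵥ u0 = 0)
    (hlam0 : lam0 ∈ LinearMap.range BD.mulVecLin) :
    Tendsto (fun ε => Real.sqrt ((u ε - u0) ⬝ᵥ (u ε - u0)))
        (nhdsWithin 0 (Set.Ioi 0)) (nhds 0) ∧
    ∀ ε : ℝ, 0 ≤ ε →
      (u ε - u0) ⬝ᵥ (u ε - u0) ≤ (ε / μmin) * ((BD *ᵥ lam ε) ⬝ᵥ lam0) := by
  -- symmetry of BD
  have hBDsym : BDᵀ = BD := by
    exact (by simpa using hBD.isHermitian : BD.IsSymm)
  have hsym : ∀ x y : Fin n → ℝ, x ⬝ᵥ (BD *ᵥ y) = y ⬝ᵥ (BD *ᵥ x) := by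
    intro x y
    rw [Matrix.dotProduct_mulVec, ← Matrix.vecMul_transpose, hBDsym,
      dotProduct_comm]
  have hpsd : ∀ x : Fin n → ℝ, 0 ≤ x ⬝ᵥ (BD *ᵥ x) := by
    intro x
    simpa using hBD.dotProduct_mulVec_nonneg x
  -- key energy estimate
  have key : ∀ ε : ℝ, 0 ≤ ε →
      μmin * ((u ε - u0) ⬝ᵥ (u ε - u0)) + ε * (lam ε ⬝ᵥ (BD *ᵥ lam ε))
        ≤ ε * ((BD *ᵥ lam ε) ⬝ᵥ lam0) := by
    intro ε hε
    set e := u ε - u0 with he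
    have h1 : A *ᵥ e = Bᵀ *ᵥ (lam0 - lam ε) := by
      have h := heq1 ε hε
      rw [← heq10] at h
      rw [he, Matrix.mulVec_sub, Matrix.mulVec_sub]
      linear_combination (norm := module) h
    have h2 : B *ᵥ e = ε • (BD *ᵥ lam ε) := by
      have h := heq2 ε hε
      rw [he, Matrix.mulVec_sub, heq20, sub_zero, ← sub_eq_zero]
      exact h
    have h3 : (A *ᵥ e) ⬝ᵥ e
        = ε * ((BD *ᵥ lam ε) ⬝ᵥ lam0) - ε * (lam ε ⬝ᵥ (BD *ᵥ lam ε)) := by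
      rw [h1, dotProduct_comm, Matrix.dotProduct_mulVec,
        Matrix.vecMul_transpose, h2, smul_dotProduct,
        dotProduct_sub, smul_eq_mul, mul_sub,
        dotProduct_comm (BD *ᵥ lam ε) (lam ε)]
    have h4 := hμ e
    linarith [h3 ▸ h4]
  constructor
  · -- convergence via squeeze
    set q0 : ℝ := lam0 ⬝ᵥ (BD *ᵥ lam0) with hq0
    have hbound : ∀ ε : ℝ, 0 ≤ ε →
        (u ε - u0) ⬝ᵥ (u ε - u0) ≤ ε * (q0 / (4 * μmin)) := by
      intro ε hε
      have hk := key ε hε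
      -- X - q ≤ q0/4 from PSD at lam ε - (1/2) • lam0
      have hv := hpsd (lam ε - (2:ℝ)⁻¹ • lam0)
      have hexp : (lam ε - (2:ℝ)⁻¹ • lam0) ⬝ᵥ (BD *ᵥ (lam ε - (2:ℝ)⁻¹ • lam0))
          = lam ε ⬝ᵥ (BD *ᵥ lam ε) - (lam0 ⬝ᵥ (BD *ᵥ lam ε)) + (1/4) * q0 := by
        simp only [Matrix.mulVec_sub, Matrix.mulVec_smul, sub_dotProduct,
          dotProduct_sub, smul_dotProduct, dotProduct_smul,
          smul_eq_mul]
        rw [hsym (lam ε) lam0, hq0]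
        ring
      rw [hexp] at hv
      have hX : (BD *ᵥ lam ε) ⬝ᵥ lam0 = lam0 ⬝ᵥ (BD *ᵥ lam ε) :=
        dotProduct_comm _ _
      rw [hX] at hk
      have hstep : ε * (lam0 ⬝ᵥ (BD *ᵥ lam ε)) - ε * (lam ε ⬝ᵥ (BD *ᵥ lam ε))
          ≤ ε * ((1/4) * q0) := by
        have : lam0 ⬝ᵥ (BD *ᵥ lam ε) - lam ε ⬝ᵥ (BD *ᵥ lam ε) ≤ (1/4) * q0 := by
          linarith
        nlinarith
      have : μmin * ((u ε - u0) ⬝ᵥ (u ε - u0)) ≤ ε * ((1/4) * q0) := by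
        linarith
      have h := (le_div_iff₀ hμmin).mpr
        (by linarith : (u ε - u0) ⬝ᵥ (u ε - u0) * μmin ≤ ε * ((1/4) * q0))
      calc (u ε - u0) ⬝ᵥ (u ε - u0) ≤ ε * ((1/4) * q0) / μmin := h
        _ = ε * (q0 / (4 * μmin)) := by ring
    have hq0nn : 0 ≤ q0 := hpsd lam0
    have hC : 0 ≤ q0 / (4 * μmin) := by positivity
    apply squeeze_zero' (g := fun ε => Real.sqrt (ε * (q0 / (4 * μmin))))
    · filter_upwards with ε
      positivity
    · filter_upwards [self_mem_nhdsWithin] with ε hε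
      exact Real.sqrt_le_sqrt (hbound ε (le_of_lt hε))
    · have : Tendsto (fun ε : ℝ => Real.sqrt (ε * (q0 / (4 * μmin)))) (nhds 0) (nhds 0) := by
        have hc : Continuous (fun ε : ℝ => Real.sqrt (ε * (q0 / (4 * μmin)))) :=
          Real.continuous_sqrt.comp (continuous_id.mul continuous_const)
        simpa using hc.tendsto (0:ℝ)
      exact this.mono_left nhdsWithin_le_nhds
  · intro ε hε
    have hk := key ε hε
    have hq := hpsd (lam ε)
    have h1 : μmin * ((u ε - u0) ⬝ᵥ (u ε - u0)) ≤ ε * ((BD *ᵥ lam ε) ⬝ᵥ lam0) := by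
      nlinarith
    rw [div_mul_eq_mul_div, le_div_iff₀ hμmin, mul_comm]
    linarith
end

section
/- Let A be symmetric positive definite, B_D symmetric positive semidefinite, S symmetric positive definite, with B A^{-1} B^T = B_D S^{-1} B_D (B = [B_D, 0]). Let P = diag(A, B A^{-1} B^T) and A_ε = [[A, B^T],[B, −ε B_D]]. If (u, λ), with λ ∈ Im B_D, is a generalized eigenpair A_ε (u, λ) = ν P (u, λ) with ν ∉ {0, 1}, then ν − 1/(ν − 1) = −ε ⟨B_D λ, λ⟩ / ⟨B_D S^{-1} B_D λ, λ⟩. -/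
open Matrix

private lemma symm_dot {n : ℕ} (M : Matrix (Fin n) (Fin n) ℝ) (hM : Mᵀ = M) (v w : Fin n → ℝ) :
    (M *ᵥ v) ⬝ᵥ w = v ⬝ᵥ (M *ᵥ w) := by
  rw [dotProduct_comm, dotProduct_mulVec, ← mulVec_transpose, hM]
  exact dotProduct_comm _ _

theorem stmt19 {n n0 : ℕ}
    (A : Matrix (Fin n ⊕ Fin n0) (Fin n ⊕ Fin n0) ℝ) (hA : A.PosDef)
    (BD S : Matrix (Fin n) (Fin n) ℝ)
    (hBD : BD.PosSemidef) (hS : S.PosDef)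
    (B : Matrix (Fin n) (Fin n ⊕ Fin n0) ℝ)
    (hB : B = Matrix.of fun i => Sum.elim (BD i) 0)
    (hSchur : B * A⁻¹ * Bᵀ = BD * S⁻¹ * BD)
    (ε : ℝ) (hε : 0 ≤ ε)
    (u : Fin n ⊕ Fin n0 → ℝ) (lam : Fin n → ℝ)
    (hlam : lam ∈ LinearMap.range BD.mulVecLin) (hlam0 : lam ≠ 0)
    (ν : ℝ) (hν0 : ν ≠ 0) (hν1 : ν ≠ 1)
    (heig1 : A *ᵥ u + Bᵀ *ᵥ lam = ν • (A *ᵥ u))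
    (heig2 : B *ᵥ u - ε • (BD *ᵥ lam) = ν • ((B * A⁻¹ * Bᵀ) *ᵥ lam)) :
    ν - 1 / (ν - 1) =
      -(ε * (((BD *ᵥ lam) ⬝ᵥ lam) / (((BD * S⁻¹ * BD) *ᵥ lam) ⬝ᵥ lam))) := by
  have hBDsym : BDᵀ = BD := (by simpa using hBD.1 : BD.IsSymm)
  have hν1' : ν - 1 ≠ 0 := sub_ne_zero.mpr hν1
  -- w := BD lam ≠ 0
  obtain ⟨y, hy⟩ := hlam
  have hy' : BD *ᵥ y = lam := hy
  have hw0 : BD *ᵥ lam ≠ 0 := by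
    intro h
    apply hlam0
    have h1 : (BD *ᵥ lam) ⬝ᵥ y = 0 := by rw [h]; simp
    rw [symm_dot BD hBDsym, hy'] at h1
    exact funext fun i => by
      have := dotProduct_self_eq_zero.mp h1
      simpa using congrFun this i
  -- positivity of denominator m
  have hm_eq : ((BD * S⁻¹ * BD) *ᵥ lam) ⬝ᵥ lam = (BD *ᵥ lam) ⬝ᵥ (S⁻¹ *ᵥ (BD *ᵥ lam)) := by
    rw [← mulVec_mulVec, ← mulVec_mulVec, symm_dot BD hBDsym, dotProduct_comm]
  have hm_pos : 0 < ((BD * S⁻¹ * BD) *ᵥ lam) ⬝ᵥ lam := by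
    rw [hm_eq]
    have := hS.inv.dotProduct_mulVec_pos hw0
    simpa using this
  set m := ((BD * S⁻¹ * BD) *ᵥ lam) ⬝ᵥ lam with hm
  have hm0 : m ≠ 0 := ne_of_gt hm_pos
  -- from heig1 : Bᵀ lam = (ν - 1) • A u
  have h1 : Bᵀ *ᵥ lam = (ν - 1) • (A *ᵥ u) := by
    have := heig1
    rw [sub_smul, one_smul]
    linear_combination (norm := module) this
  -- M lam = (ν - 1) • B u
  have hAinv : A⁻¹ * A = 1 := nonsing_inv_mul A (isUnit_iff_ne_zero.mpr hA.det_pos.ne')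
  have key : (B * A⁻¹ * Bᵀ) *ᵥ lam = (ν - 1) • (B *ᵥ u) := by
    rw [← mulVec_mulVec, h1, mulVec_smul, mulVec_mulVec, Matrix.mul_assoc, hAinv, Matrix.mul_one]
  -- dot heig2 with lam
  have hd : (B *ᵥ u) ⬝ᵥ lam - ε * ((BD *ᵥ lam) ⬝ᵥ lam) = ν * m := by
    have := congrArg (fun v => v ⬝ᵥ lam) heig2
    simpa [sub_dotProduct, smul_dotProduct, smul_eq_mul, hm, hSchur] using this
  have hkey : m = (ν - 1) * ((B *ᵥ u) ⬝ᵥ lam) := by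
    rw [hm, ← hSchur, key, smul_dotProduct, smul_eq_mul]
  set b := (BD *ᵥ lam) ⬝ᵥ lam with hb
  set c := (B *ᵥ u) ⬝ᵥ lam with hc
  field_simp
  linear_combination (-(ν - 1)) * hd - hkey
end
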